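/- Let G be a finite simple graph and let G' be obtained from G by splitting each vertex u into a family of 'mininodes' that partition the edges incident to u (each edge of G corresponds to exactly one edge of G' between the corresponding mininodes of its endpoints). If M' is a maximal matching of G', and M is the corresponding edge set in G, then M is a k-matching of G, where k is the maximum number of mininodes into which any vertex is split. -/
import Mathlib


variable {V : Type*}

/-- The number of edges of `M` incident to the vertex `v`. -/
noncomputable def degOn (M : Set (Sym2 V)) (v : V) : ℕ := {e ∈ M | v ∈ e}.ncard

/-- `M` is a matching of `G`: a set of edges of `G` that are pairwise non-adjacent,
i.e. every vertex is incident to at most one edge of `M`. -/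
def IsMatchingSet (G : SimpleGraph V) (M : Set (Sym2 V)) : Prop :=
  M ⊆ G.edgeSet ∧ ∀ v, degOn M v ≤ 1

/-- `M` is a maximal matching of `G`: no edge of `G` can be added to `M`
while keeping it a matching. -/
def IsMaximalMatchingSet (G : SimpleGraph V) (M : Set (Sym2 V)) : Prop :=
  IsMatchingSet G M ∧ ∀ e ∈ G.edgeSet, IsMatchingSet G (insert e M) → e ∈ M

/-- `M` is a `k`-matching of `G`: every vertex is incident to at most `k` edges of `M`,
and every vertex incident to no edge of `M` has all its neighbors incident to
at least one edge of `M`. -/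
def IsKMatching (G : SimpleGraph V) (k : ℕ) (M : Set (Sym2 V)) : Prop :=
  M ⊆ G.edgeSet ∧ (∀ v, degOn M v ≤ k) ∧
    ∀ v, degOn M v = 0 → ∀ w, G.Adj v w → 1 ≤ degOn M w

lemma degOn_eq_zero_iff {α : Type*} [Fintype α] (M : Set (Sym2 α)) (v : α) :
    degOn M v = 0 ↔ ∀ e ∈ M, v ∉ e := by
  rw [degOn, Set.ncard_eq_zero (Set.toFinite _)]
  simp [Set.eq_empty_iff_forall_notMem]

lemma one_le_degOn {α : Type*} [Fintype α] {M : Set (Sym2 α)} {v : α} {e : Sym2 α}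
    (he : e ∈ M) (hv : v ∈ e) : 1 ≤ degOn M v := by
  rw [degOn]
  have : 0 < ({x ∈ M | v ∈ x} : Set (Sym2 α)).ncard := by
    rw [Set.ncard_pos (Set.toFinite _)]
    exact ⟨e, he, hv⟩
  omega

lemma degOn_le_one_unique {α : Type*} [Fintype α] {M : Set (Sym2 α)} {v : α}
    (h : degOn M v ≤ 1) {e f : Sym2 α} (he : e ∈ M) (hf : f ∈ M)
    (hve : v ∈ e) (hvf : v ∈ f) : e = f := by
  by_contra hne
  have hsub : ({e, f} : Set (Sym2 α)) ⊆ {x ∈ M | v ∈ x} := by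
    rintro x (rfl | rfl) <;> exact ⟨by assumption, by assumption⟩
  have h2 : 2 ≤ degOn M v := by
    calc 2 = ({e, f} : Set (Sym2 α)).ncard := (Set.ncard_pair hne).symm
    _ ≤ _ := Set.ncard_le_ncard hsub (Set.toFinite _)
  omega

theorem stmt_13 {V' : Type*} [Fintype V] [Fintype V']
    (G : SimpleGraph V) (G' : SimpleGraph V') (φ : V' → V) (k : ℕ)
    (hbij : Set.BijOn (Sym2.map φ) G'.edgeSet G.edgeSet)
    (hfib : ∀ v : V, {v' : V' | φ v' = v}.ncard ≤ k)
    (M' : Set (Sym2 V')) (hM' : IsMaximalMatchingSet G' M') :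
    IsKMatching G k (Sym2.map φ '' M') := by
  classical
  obtain ⟨⟨hM'sub, hM'deg⟩, hmax⟩ := hM'
  have hMsub : Sym2.map φ '' M' ⊆ G.edgeSet := by
    rintro _ ⟨e', he', rfl⟩
    exact hbij.mapsTo (hM'sub he')
  refine ⟨hMsub, ?_, ?_⟩
  · intro v
    set S : Set (Sym2 V') := {e' ∈ M' | ∃ v' ∈ e', φ v' = v} with hS
    have hsub : {e ∈ Sym2.map φ '' M' | v ∈ e} ⊆ Sym2.map φ '' S := by
      rintro e ⟨⟨e', he', rfl⟩, hv⟩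
      rw [Sym2.mem_map] at hv
      exact ⟨e', ⟨he', hv⟩, rfl⟩
    have hSk : S.ncard ≤ {v' : V' | φ v' = v}.ncard := by
      rcases S.eq_empty_or_nonempty with hE | ⟨e0, he0⟩
      · simp [hE]
      · have hne : Nonempty V' := ⟨he0.2.choose⟩
        refine Set.ncard_le_ncard_of_injOn
          (fun e' => if h : ∃ v' ∈ e', φ v' = v then h.choose else Classical.arbitrary V')
          ?_ ?_ (Set.toFinite _)
        · intro e' he'
          simp only [dif_pos he'.2]
          exact he'.2.choose_spec.2
        · intro e1 h1 e2 h2 heq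
          simp only [dif_pos h1.2, dif_pos h2.2] at heq
          have hm1 := h1.2.choose_spec.1
          have hm2 := h2.2.choose_spec.1
          rw [heq] at hm1
          exact degOn_le_one_unique (hM'deg _) h1.1 h2.1 hm1 hm2
    calc degOn (Sym2.map φ '' M') v
        ≤ (Sym2.map φ '' S).ncard := Set.ncard_le_ncard hsub (Set.toFinite _)
      _ ≤ S.ncard := Set.ncard_image_le (Set.toFinite _)
      _ ≤ {v' : V' | φ v' = v}.ncard := hSk
      _ ≤ k := hfib v
  · intro v hv0 w hadj
    by_contra hlt
    have hw0 : degOn (Sym2.map φ '' M') w = 0 := by omega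
    obtain ⟨e', he'G, he'map⟩ := hbij.surjOn ((G.mem_edgeSet).mpr hadj)
    have hfree : ∀ u' : V', u' ∈ e' → ∀ e'' ∈ M', u' ∉ e'' := by
      intro u' hu' e'' he'' hmem
      have hφ : φ u' ∈ Sym2.map φ e' := Sym2.mem_map.2 ⟨u', hu', rfl⟩
      rw [he'map, Sym2.mem_iff] at hφ
      have h1 : φ u' ∈ Sym2.map φ e'' := Sym2.mem_map.2 ⟨u', hmem, rfl⟩
      have h2 : Sym2.map φ e'' ∈ Sym2.map φ '' M' := ⟨e'', he'', rfl⟩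
      rcases hφ with h | h <;> rw [h] at h1
      · exact ((degOn_eq_zero_iff _ _).1 hv0) _ h2 h1
      · exact ((degOn_eq_zero_iff _ _).1 hw0) _ h2 h1
    have hins : IsMatchingSet G' (insert e' M') := by
      refine ⟨Set.insert_subset he'G hM'sub, ?_⟩
      intro u
      by_cases hu : u ∈ e'
      · have : {x ∈ insert e' M' | u ∈ x} = {e'} := by
          ext x
          simp only [Set.mem_setOf_eq, Set.mem_insert_iff, Set.mem_singleton_iff]
          constructor
          · rintro ⟨rfl | hx, hux⟩
            · rfl
            · exact absurd hux (hfree u hu x hx)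
          · rintro rfl; exact ⟨Or.inl rfl, hu⟩
        rw [degOn, this, Set.ncard_singleton]
      · have : {x ∈ insert e' M' | u ∈ x} = {x ∈ M' | u ∈ x} := by
          ext x
          simp only [Set.mem_setOf_eq, Set.mem_insert_iff]
          constructor
          · rintro ⟨rfl | hx, hux⟩
            · exact absurd hux hu
            · exact ⟨hx, hux⟩
          · rintro ⟨hx, hux⟩; exact ⟨Or.inr hx, hux⟩
        rw [degOn, this]
        exact hM'deg u
    have he'M : e' ∈ M' := hmax e' he'G hins
    have : (1 : ℕ) ≤ degOn (Sym2.map φ '' M') v := by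
      refine one_le_degOn ⟨e', he'M, he'map⟩ ?_
      exact Sym2.mem_mk_left v w
    omega
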